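/- If miner i deviates from Nash equilibrium to x_i* + Δ, the maximum Δ before miner i's payoff becomes zero is Δ_i = 1/c_i − 1/c*; that is, Π_i(x_i* + Δ_i, x*_{-i}) = 0 and Π_i(x_i* + Δ, x*_{-i}) > 0 for 0 ≤ Δ < Δ_i. -/

import Mathlib

open Finset

/-- Payoff of miner `i` in the mining game with costs `c` and allocations `x`. -/
noncomputable def payoff {n : ℕ} (c x : Fin n → ℝ) (i : Fin n) : ℝ :=
  x i / (∑ j, x j) - c i * x i

/-- the maximum deviation `Δ` before miner `i`'s payoff hits zero is
`Δ_i = 1/c_i − 1/c*`: the payoff vanishes at `Δ_i` and is strictly positive for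
`0 ≤ Δ < Δ_i`. -/
theorem breakeven_deviation (n : ℕ) (hn : 2 ≤ n) (c : Fin n → ℝ)
    (hc : ∀ i, 0 < c i)
    (cstar : ℝ) (hcstar : cstar = (∑ j, c j) / ((n : ℝ) - 1))
    (hpart : ∀ i, c i < cstar)
    (xstar : Fin n → ℝ) (hx : ∀ i, xstar i = (1 - c i / cstar) / cstar)
    (i : Fin n) :
    payoff c (Function.update xstar i (xstar i + (1 / c i - 1 / cstar))) i = 0 ∧
    ∀ Δ : ℝ, 0 ≤ Δ → Δ < 1 / c i - 1 / cstar →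
      0 < payoff c (Function.update xstar i (xstar i + Δ)) i := by
  have hcs0 : 0 < cstar := lt_trans (hc i) (hpart i)
  have hcsne : cstar ≠ 0 := ne_of_gt hcs0
  have hci0 : 0 < c i := hc i
  have hcine : c i ≠ 0 := ne_of_gt hci0
  have hn1 : ((n : ℝ) - 1) ≠ 0 := by
    have : (2 : ℝ) ≤ (n : ℝ) := by exact_mod_cast hn
    nlinarith
  have hsc : ∑ j, c j = cstar * ((n : ℝ) - 1) := by
    rw [hcstar]; field_simp
  have hsum : ∑ j, xstar j = 1 / cstar := by
    have h1 : ∑ j, xstar j = ((n : ℝ) - (∑ j, c j) / cstar) / cstar := by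
      simp only [hx]
      rw [← Finset.sum_div, Finset.sum_sub_distrib, Finset.sum_const, card_univ,
        Fintype.card_fin, ← Finset.sum_div]
      ring
    rw [h1, hsc]
    field_simp
    ring
  -- the sum after an update
  have hSum : ∀ v : ℝ, ∑ j, Function.update xstar i v j = 1 / cstar + (v - xstar i) := by
    intro v
    rw [Finset.sum_update_of_mem (Finset.mem_univ i)]
    rw [Finset.sdiff_singleton_eq_erase, Finset.sum_erase_eq_sub (Finset.mem_univ i), hsum]
    ring
  have hxpos : 0 < xstar i := by
    rw [hx]
    apply div_pos _ hcs0
    have : c i / cstar < 1 := (div_lt_one hcs0).2 (hpart i)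
    linarith
  constructor
  · -- payoff zero at Δ_i
    have hS := hSum (xstar i + (1 / c i - 1 / cstar))
    unfold payoff
    rw [hS, Function.update_self]
    have : 1 / cstar + (xstar i + (1 / c i - 1 / cstar) - xstar i) = 1 / c i := by ring
    rw [this]
    field_simp
    ring
  · intro Δ hΔ0 hΔlt
    have hS := hSum (xstar i + Δ)
    unfold payoff
    rw [hS, Function.update_self]
    have hSval : 1 / cstar + (xstar i + Δ - xstar i) = 1 / cstar + Δ := by ring
    rw [hSval]
    set S : ℝ := 1 / cstar + Δ with hSdef
    have hSpos : 0 < S := by positivity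
    have hSlt : S < 1 / c i := by rw [hSdef]; linarith
    have hciS : c i < 1 / S := by
      have := one_div_lt_one_div_of_lt hSpos hSlt
      rwa [one_div_one_div] at this
    have hxpos' : 0 < xstar i + Δ := by linarith
    have : c i * (xstar i + Δ) < (1 / S) * (xstar i + Δ) :=
      mul_lt_mul_of_pos_right hciS hxpos'
    have heq : (1 / S) * (xstar i + Δ) = (xstar i + Δ) / S := by ring
    linarith [heq ▸ this]
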